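/- For the path P_t on t ≥ 2 vertices, the maximum running time of the P_t-bootstrap process on n-vertex graphs satisfies M_{P_t}(n) ≤ 3. -/

import Mathlib

open SimpleGraph Finset

/-- `f` maps `H` to a copy of `H` inside `G`. -/
def IsCopyOf {α V : Type*} (H : SimpleGraph α) (G : SimpleGraph V) (f : α → V) : Prop :=
  Function.Injective f ∧ ∀ a b, H.Adj a b → G.Adj (f a) (f b)

/-- One round of the `H`-bootstrap process: add every edge whose addition
creates a new copy of `H` (i.e. the edge is the last missing edge of a copy of `H`). -/
def bootStep {α V : Type*} (H : SimpleGraph α) (G : SimpleGraph V) : SimpleGraph V where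
  Adj u v := G.Adj u v ∨ (u ≠ v ∧ ∃ f : α → V,
      IsCopyOf H (G ⊔ SimpleGraph.fromEdgeSet {s(u, v)}) f ∧
      ∃ a b, H.Adj a b ∧ f a = u ∧ f b = v)
  symm := by
    constructor
    intro u v h
    rcases h with h | ⟨hne, f, hf, a, b, hab, hfa, hfb⟩
    · exact Or.inl h.symm
    · refine Or.inr ⟨hne.symm, f, ?_, b, a, hab.symm, hfb, hfa⟩
      rwa [Sym2.eq_swap]
  loopless := by
    constructor
    intro u h
    rcases h with h | ⟨hne, _⟩
    · exact G.irrefl h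
    · exact hne rfl

/-- The `H`-bootstrap process on starting graph `G`. -/
def bootProc {α V : Type*} (H : SimpleGraph α) (G : SimpleGraph V) : ℕ → SimpleGraph V
  | 0 => G
  | (n + 1) => bootStep H (bootProc H G n)

/-- The running time of the `H`-process on `G`: the least `t` with `G_{t+1} = G_t`. -/
noncomputable def bootRunTime {α V : Type*} (H : SimpleGraph α) (G : SimpleGraph V) : ℕ :=
  sInf {t | bootProc H G (t + 1) = bootProc H G t}

/-- The final (stabilised) graph of the `H`-process on `G`. -/
noncomputable def bootFinal {α V : Type*} (H : SimpleGraph α) (G : SimpleGraph V) :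
    SimpleGraph V :=
  bootProc H G (bootRunTime H G)

section Aux

variable {α V : Type*}

lemma le_bootStep (H : SimpleGraph α) (G : SimpleGraph V) : G ≤ bootStep H G :=
  fun _ _ h => Or.inl h

lemma bootStep_top (H : SimpleGraph α) :
    bootStep H (⊤ : SimpleGraph V) = ⊤ := by
  ext x y
  constructor
  · intro h
    rcases h with h | ⟨hne, _⟩
    · exact h
    · exact hne
  · intro h
    exact Or.inl h

/-- Key lemma: if `w` is an injective `t`-sequence whose consecutive pairs are
all `G`-adjacent except possibly at position `k`, then the pair at position `k`
becomes adjacent after one bootstrap step with `pathGraph t`. -/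
lemma bootStep_adj_of_seq {t : ℕ} {G : SimpleGraph V} (w : Fin t → V)
    (hw : Function.Injective w) (k : ℕ) (hk : k + 1 < t)
    (hadj : ∀ i : ℕ, (hi : i + 1 < t) → i ≠ k →
      G.Adj (w ⟨i, Nat.lt_of_succ_lt hi⟩) (w ⟨i + 1, hi⟩)) :
    (bootStep (SimpleGraph.pathGraph t) G).Adj (w ⟨k, Nat.lt_of_succ_lt hk⟩) (w ⟨k + 1, hk⟩) := by
  have hne : w ⟨k, Nat.lt_of_succ_lt hk⟩ ≠ w ⟨k + 1, hk⟩ := by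
    intro h
    have := hw h
    simp only [Fin.mk.injEq] at this
    omega
  refine Or.inr ⟨hne, w, ⟨hw, ?_⟩, ⟨k, Nat.lt_of_succ_lt hk⟩, ⟨k + 1, hk⟩, ?_, rfl, rfl⟩
  · rintro ⟨a, ha⟩ ⟨b, hb⟩ hab
    rw [SimpleGraph.pathGraph_adj] at hab
    simp only at hab
    rcases hab with hab | hab
    · by_cases hak : a = k
      · subst hak
        refine Or.inr ⟨?_, ?_⟩
        · have hb' : b = a + 1 := hab.symm
          subst hb'
          exact Set.mem_singleton _
        · intro h
          have := hw h
          simp only [Fin.mk.injEq] at this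
          omega
      · subst hab
        exact Or.inl (hadj a hb hak)
    · by_cases hbk : b = k
      · subst hbk
        refine Or.inr ⟨?_, ?_⟩
        · have ha' : a = b + 1 := hab.symm
          subst ha'
          rw [Sym2.eq_swap]
          exact Set.mem_singleton _
        · intro h
          have := hw h
          simp only [Fin.mk.injEq] at this
          omega
      · subst hab
        exact Or.inl (hadj b ha hbk).symm
  · rw [SimpleGraph.pathGraph_adj]
    left
    rfl

end Aux

section Univ

variable {V : Type*}

/-- If `w` is a `t`-vertex path in `G` (t ≥ 2), then after one step its last
vertex is adjacent to every other vertex. -/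
lemma endpoint_univ {t : ℕ} (ht : 2 ≤ t) {G : SimpleGraph V} (w : Fin t → V)
    (hw : Function.Injective w)
    (hadj : ∀ i : ℕ, (hi : i + 1 < t) → G.Adj (w ⟨i, Nat.lt_of_succ_lt hi⟩) (w ⟨i + 1, hi⟩))
    (v : V) (hv : v ≠ w ⟨t - 1, by omega⟩) :
    (bootStep (SimpleGraph.pathGraph t) G).Adj (w ⟨t - 1, by omega⟩) v := by
  by_cases hvr : ∃ j : Fin t, v = w j
  · obtain ⟨⟨j, hj⟩, rfl⟩ := hvr
    have hjt : j ≠ t - 1 := by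
      intro h
      exact hv (congrArg w (by simp only [Fin.mk.injEq]; omega))
    -- sequence: w (j+1), ..., w (t-1), w j, w (j-1), ..., w 0
    set s : Fin t → V := fun i =>
      if h : i.val + j + 1 < t then w ⟨i.val + j + 1, h⟩ else w ⟨t - 1 - i.val, by omega⟩
      with hs
    have hsinj : Function.Injective s := by
      rintro ⟨a, ha⟩ ⟨b, hb⟩ h
      simp only [hs] at h
      split_ifs at h with h1 h2 h2 <;>
        (have := hw h; simp only [Fin.mk.injEq] at this ⊢; omega)
    have key := bootStep_adj_of_seq (G := G) s hsinj (t - 2 - j) (by omega) ?_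
    · have e1 : s ⟨t - 2 - j, by omega⟩ = w ⟨t - 1, by omega⟩ := by
        simp only [hs]
        rw [dif_pos (by omega : (t - 2 - j) + j + 1 < t)]
        congr 1
        simp only [Fin.mk.injEq]
        omega
      have e2 : s ⟨t - 2 - j + 1, by omega⟩ = w ⟨j, hj⟩ := by
        simp only [hs]
        rw [dif_neg (by omega : ¬((t - 2 - j + 1) + j + 1 < t))]
        congr 1
        simp only [Fin.mk.injEq]
        omega
      rwa [e1, e2] at key
    · intro i hi hik
      simp only [hs]
      by_cases h1 : i + j + 1 < t
      · have h2 : i + 1 + j + 1 < t := by omega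
        rw [dif_pos h1, dif_pos h2]
        convert hadj (i + j + 1) (by omega : (i + j + 1) + 1 < t) using 2 <;>
          (simp only [Fin.mk.injEq]; omega)
      · have h2 : ¬ (i + 1 + j + 1 < t) := by omega
        rw [dif_neg h1, dif_neg h2]
        convert (hadj (t - 1 - (i + 1)) (by omega : (t - 1 - (i + 1)) + 1 < t)).symm using 2 <;>
          (simp only [Fin.mk.injEq]; omega)
  · push_neg at hvr
    -- sequence: w 1, w 2, ..., w (t-1), v
    set s : Fin t → V := fun i =>
      if h : i.val + 1 < t then w ⟨i.val + 1, h⟩ else v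
      with hs
    have hsinj : Function.Injective s := by
      rintro ⟨a, ha⟩ ⟨b, hb⟩ h
      simp only [hs] at h
      split_ifs at h with h1 h2 h2
      · have := hw h
        simp only [Fin.mk.injEq] at this ⊢
        omega
      · exact absurd h.symm (hvr _)
      · exact absurd h (hvr _)
      · simp only [Fin.mk.injEq]
        omega
    have key := bootStep_adj_of_seq (G := G) s hsinj (t - 2) (by omega) ?_
    · have e1 : s ⟨t - 2, by omega⟩ = w ⟨t - 1, by omega⟩ := by
        simp only [hs]
        rw [dif_pos (by omega : t - 2 + 1 < t)]
        congr 1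
        simp only [Fin.mk.injEq]
        omega
      have e2 : s ⟨t - 2 + 1, by omega⟩ = v := by
        simp only [hs]
        rw [dif_neg (by omega : ¬(t - 2 + 1 + 1 < t))]
      rwa [e1, e2] at key
    · intro i hi hik
      simp only [hs]
      rw [dif_pos (by omega : i + 1 < t), dif_pos (by omega : i + 1 + 1 < t)]
      exact hadj (i + 1) (by omega)

end Univ

section AllPairs

variable {V : Type*}

/-- Construction: both `u` and `v` outside the path. -/
lemma aux_both_out {t : ℕ} (ht : 2 ≤ t) {G : SimpleGraph V} (w : Fin t → V)
    (hw : Function.Injective w)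
    (hadj : ∀ i : ℕ, (hi : i + 1 < t) → G.Adj (w ⟨i, Nat.lt_of_succ_lt hi⟩) (w ⟨i + 1, hi⟩))
    (hg1 : ∀ x, x ≠ w ⟨0, by omega⟩ → G.Adj (w ⟨0, by omega⟩) x)
    {u v : V} (huv : u ≠ v) (hu : ∀ p : Fin t, u ≠ w p) (hv : ∀ p : Fin t, v ≠ w p) :
    (bootStep (SimpleGraph.pathGraph t) G).Adj u v := by
  set s : Fin t → V := fun i =>
    if h : i.val + 3 ≤ t then w ⟨t - 3 - i.val, by omega⟩
    else if i.val = t - 2 then u else v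
    with hs
  have hsinj : Function.Injective s := by
    rintro ⟨a, ha⟩ ⟨b, hb⟩ h
    simp only [hs] at h
    split_ifs at h with h1 h2 h3 h3 h4 h5 h5 h6
    · have := hw h; simp only [Fin.mk.injEq] at this ⊢; omega
    · exact absurd h.symm (hu _)
    · exact absurd h.symm (hv _)
    · exact absurd h (hu _)
    · simp only [Fin.mk.injEq]; omega
    · exact absurd h huv
    · exact absurd h (hv _)
    · exact absurd h.symm huv
    · simp only [Fin.mk.injEq]; omega
  have key := bootStep_adj_of_seq (G := G) s hsinj (t - 2) (by omega) ?_
  · have e1 : s ⟨t - 2, by omega⟩ = u := by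
      simp only [hs]
      rw [dif_neg (by omega : ¬(t - 2 + 3 ≤ t))]
      split <;> first | rfl | omega | simp_all
    have e2 : s ⟨t - 2 + 1, by omega⟩ = v := by
      simp only [hs]
      rw [dif_neg (by omega : ¬(t - 2 + 1 + 3 ≤ t))]
      split <;> first | rfl | omega | simp_all
    rwa [e1, e2] at key
  · intro i hi hik
    have hi3 : i + 3 ≤ t := by omega
    simp only [hs]
    by_cases h1 : i + 1 + 3 ≤ t
    · rw [dif_pos hi3, dif_pos h1]
      convert (hadj (t - 3 - (i + 1)) (by omega : (t - 3 - (i + 1)) + 1 < t)).symm using 2 <;>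
        (simp only [Fin.mk.injEq]; omega)
    · rw [dif_pos hi3, dif_neg h1, if_pos (by omega : i + 1 = t - 2)]
      have h0 : (⟨t - 3 - i, by omega⟩ : Fin t) = ⟨0, by omega⟩ := by
        simp only [Fin.mk.injEq]; omega
      rw [h0]
      exact hg1 u (hu _)

/-- Construction: `u = w p` on the path (`1 ≤ p ≤ t-2`), `v` outside. -/
lemma aux_one_in {t : ℕ} (ht : 2 ≤ t) {G : SimpleGraph V} (w : Fin t → V)
    (hw : Function.Injective w)
    (hadj : ∀ i : ℕ, (hi : i + 1 < t) → G.Adj (w ⟨i, Nat.lt_of_succ_lt hi⟩) (w ⟨i + 1, hi⟩))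
    (hg1 : ∀ x, x ≠ w ⟨0, by omega⟩ → G.Adj (w ⟨0, by omega⟩) x)
    {v : V} (hv : ∀ r : Fin t, v ≠ w r) (p : ℕ) (hp : p < t) (hp1 : 1 ≤ p) (hp2 : p ≤ t - 2) :
    (bootStep (SimpleGraph.pathGraph t) G).Adj (w ⟨p, hp⟩) v := by
  set s : Fin t → V := fun i =>
    if h1 : i.val < p then w ⟨p - 1 - i.val, by omega⟩
    else if h2 : i.val ≤ t - 2 then w ⟨t - 2 - (i.val - p), by omega⟩
    else v
    with hs
  have hsinj : Function.Injective s := by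
    rintro ⟨a, ha⟩ ⟨b, hb⟩ h
    simp only [hs] at h
    split_ifs at h with h1 h2 h3 h3 h4 h5 h5 h6
    · have := hw h; simp only [Fin.mk.injEq] at this ⊢; omega
    · have := hw h; simp only [Fin.mk.injEq] at this ⊢; omega
    · exact absurd h.symm (hv _)
    · have := hw h; simp only [Fin.mk.injEq] at this ⊢; omega
    · have := hw h; simp only [Fin.mk.injEq] at this ⊢; omega
    · exact absurd h.symm (hv _)
    · exact absurd h (hv _)
    · exact absurd h (hv _)
    · simp only [Fin.mk.injEq]; omega
  have key := bootStep_adj_of_seq (G := G) s hsinj (t - 2) (by omega) ?_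
  · have e1 : s ⟨t - 2, by omega⟩ = w ⟨p, hp⟩ := by
      simp only [hs]
      rw [dif_neg (by omega : ¬(t - 2 < p)), dif_pos (by omega : t - 2 ≤ t - 2)]
      congr 1
      simp only [Fin.mk.injEq]; omega
    have e2 : s ⟨t - 2 + 1, by omega⟩ = v := by
      simp only [hs]
      rw [dif_neg (by omega : ¬(t - 2 + 1 < p)), dif_neg (by omega : ¬(t - 2 + 1 ≤ t - 2))]
    rwa [e1, e2] at key
  · intro i hi hik
    simp only [hs]
    by_cases h1 : i + 1 < p
    · rw [dif_pos (by omega : i < p), dif_pos h1]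
      convert (hadj (p - 1 - (i + 1)) (by omega : (p - 1 - (i + 1)) + 1 < t)).symm using 2 <;>
        (simp only [Fin.mk.injEq]; omega)
    · by_cases h2 : i + 1 = p
      · rw [dif_pos (by omega : i < p), dif_neg (by omega : ¬(i + 1 < p)),
          dif_pos (by omega : i + 1 ≤ t - 2)]
        have h0 : (⟨p - 1 - i, by omega⟩ : Fin t) = ⟨0, by omega⟩ := by
          simp only [Fin.mk.injEq]; omega
        rw [h0]
        refine hg1 _ ?_
        intro hcon
        have := hw hcon
        simp only [Fin.mk.injEq] at this
        omega
      · -- p ≤ i, i ≤ t - 3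
        rw [dif_neg (by omega : ¬(i < p)), dif_neg (by omega : ¬(i + 1 < p)),
          dif_pos (by omega : i ≤ t - 2), dif_pos (by omega : i + 1 ≤ t - 2)]
        convert (hadj (t - 2 - (i + 1 - p)) (by omega : (t - 2 - (i + 1 - p)) + 1 < t)).symm using 2 <;>
          (simp only [Fin.mk.injEq]; omega)

/-- Construction: `u = w p`, `v = w q` both on the path, `1 ≤ p < q`. -/
lemma aux_two_in {t : ℕ} (ht : 2 ≤ t) {G : SimpleGraph V} (w : Fin t → V)
    (hw : Function.Injective w)
    (hadj : ∀ i : ℕ, (hi : i + 1 < t) → G.Adj (w ⟨i, Nat.lt_of_succ_lt hi⟩) (w ⟨i + 1, hi⟩))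
    (hg1 : ∀ x, x ≠ w ⟨0, by omega⟩ → G.Adj (w ⟨0, by omega⟩) x)
    (p q : ℕ) (hq : q < t) (hp1 : 1 ≤ p) (hpq : p < q) :
    (bootStep (SimpleGraph.pathGraph t) G).Adj (w ⟨p, by omega⟩) (w ⟨q, hq⟩) := by
  set s : Fin t → V := fun i =>
    if h1 : i.val < p then w ⟨p - 1 - i.val, by omega⟩
    else if h2 : i.val < q then w ⟨q - 1 - (i.val - p), by omega⟩
    else w ⟨i.val, i.isLt⟩
    with hs
  have hsinj : Function.Injective s := by
    rintro ⟨a, ha⟩ ⟨b, hb⟩ h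
    simp only [hs] at h
    split_ifs at h <;> (have := hw h; simp only [Fin.mk.injEq] at this ⊢; omega)
  have key := bootStep_adj_of_seq (G := G) s hsinj (q - 1) (by omega) ?_
  · have e1 : s ⟨q - 1, by omega⟩ = w ⟨p, by omega⟩ := by
      simp only [hs]
      rw [dif_neg (by omega : ¬(q - 1 < p)), dif_pos (by omega : q - 1 < q)]
      congr 1
      simp only [Fin.mk.injEq]; omega
    have e2 : s ⟨q - 1 + 1, by omega⟩ = w ⟨q, hq⟩ := by
      simp only [hs]
      rw [dif_neg (by omega : ¬(q - 1 + 1 < p)), dif_neg (by omega : ¬(q - 1 + 1 < q))]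
      congr 1
      simp only [Fin.mk.injEq]; omega
    rwa [e1, e2] at key
  · intro i hi hik
    simp only [hs]
    by_cases h1 : i + 1 < p
    · rw [dif_pos (by omega : i < p), dif_pos h1]
      convert (hadj (p - 1 - (i + 1)) (by omega : (p - 1 - (i + 1)) + 1 < t)).symm using 2 <;>
        (simp only [Fin.mk.injEq]; omega)
    · by_cases h2 : i + 1 = p
      · rw [dif_pos (by omega : i < p), dif_neg (by omega : ¬(i + 1 < p)),
          dif_pos (by omega : i + 1 < q)]
        have h0 : (⟨p - 1 - i, by omega⟩ : Fin t) = ⟨0, by omega⟩ := by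
          simp only [Fin.mk.injEq]; omega
        rw [h0]
        refine hg1 _ ?_
        intro hcon
        have := hw hcon
        simp only [Fin.mk.injEq] at this
        omega
      · by_cases h3 : i + 1 < q
        · rw [dif_neg (by omega : ¬(i < p)), dif_neg (by omega : ¬(i + 1 < p)),
            dif_pos (by omega : i < q), dif_pos h3]
          convert (hadj (q - 1 - (i + 1 - p)) (by omega : (q - 1 - (i + 1 - p)) + 1 < t)).symm using 2 <;>
            (simp only [Fin.mk.injEq]; omega)
        · -- i ≥ q
          rw [dif_neg (by omega : ¬(i < p)), dif_neg (by omega : ¬(i < q)),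
            dif_neg (by omega : ¬(i + 1 < p)), dif_neg (by omega : ¬(i + 1 < q))]
          exact hadj i hi

/-- If `w` is a `t`-vertex path in `G` with both endpoints adjacent to every
other vertex, then one bootstrap step makes the graph complete. -/
lemma all_pairs {t : ℕ} (ht : 2 ≤ t) {G : SimpleGraph V} (w : Fin t → V)
    (hw : Function.Injective w)
    (hadj : ∀ i : ℕ, (hi : i + 1 < t) → G.Adj (w ⟨i, Nat.lt_of_succ_lt hi⟩) (w ⟨i + 1, hi⟩))
    (hg1 : ∀ x, x ≠ w ⟨0, by omega⟩ → G.Adj (w ⟨0, by omega⟩) x)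
    (hg2 : ∀ x, x ≠ w ⟨t - 1, by omega⟩ → G.Adj (w ⟨t - 1, by omega⟩) x)
    (u v : V) (huv : u ≠ v) :
    (bootStep (SimpleGraph.pathGraph t) G).Adj u v := by
  by_cases hu0 : u = w ⟨0, by omega⟩
  · exact Or.inl (by rw [hu0]; exact hg1 v (by rw [← hu0]; exact huv.symm))
  by_cases hv0 : v = w ⟨0, by omega⟩
  · exact Or.inl (by rw [hv0]; exact (hg1 u (by rw [← hv0]; exact huv)).symm)
  by_cases hu1 : u = w ⟨t - 1, by omega⟩
  · exact Or.inl (by rw [hu1]; exact hg2 v (by rw [← hu1]; exact huv.symm))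
  by_cases hv1 : v = w ⟨t - 1, by omega⟩
  · exact Or.inl (by rw [hv1]; exact (hg2 u (by rw [← hv1]; exact huv)).symm)
  by_cases hur : ∃ r : Fin t, u = w r
  · obtain ⟨⟨p, hp⟩, rfl⟩ := hur
    have hp1 : 1 ≤ p := by
      rcases Nat.eq_zero_or_pos p with h | h
      · exact absurd (by congr 1; simp only [Fin.mk.injEq]; omega) hu0
      · exact h
    have hp2 : p ≤ t - 2 := by
      by_contra hc
      exact hu1 (by congr 1; simp only [Fin.mk.injEq]; omega)
    by_cases hvr : ∃ r : Fin t, v = w r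
    · obtain ⟨⟨q, hqt⟩, rfl⟩ := hvr
      have hq1 : 1 ≤ q := by
        rcases Nat.eq_zero_or_pos q with h | h
        · exact absurd (by congr 1; simp only [Fin.mk.injEq]; omega) hv0
        · exact h
      have hpq : p ≠ q := by
        intro h
        exact huv (by congr 1; simp only [Fin.mk.injEq]; omega)
      rcases Nat.lt_or_ge p q with h | h
      · exact aux_two_in ht w hw hadj hg1 p q hqt hp1 h
      · exact (aux_two_in ht w hw hadj hg1 q p hp hq1 (by omega)).symm
    · push_neg at hvr
      exact aux_one_in ht w hw hadj hg1 hvr p hp hp1 hp2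
  · push_neg at hur
    by_cases hvr : ∃ r : Fin t, v = w r
    · obtain ⟨⟨q, hqt⟩, rfl⟩ := hvr
      have hq1 : 1 ≤ q := by
        rcases Nat.eq_zero_or_pos q with h | h
        · exact absurd (by congr 1; simp only [Fin.mk.injEq]; omega) hv0
        · exact h
      have hq2 : q ≤ t - 2 := by
        by_contra hc
        exact hv1 (by congr 1; simp only [Fin.mk.injEq]; omega)
      exact (aux_one_in ht w hw hadj hg1 hur q hqt hq1 hq2).symm
    · push_neg at hvr
      exact aux_both_out ht w hw hadj hg1 huv hur hvr

end AllPairs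

/-- For the path `P_t` on `t ≥ 2` vertices, the `P_t`-bootstrap process on any `n`-vertex
graph stabilises within 3 rounds: `M_{P_t}(n) ≤ 3`. -/
theorem stmt_12 (t : ℕ) (ht : 2 ≤ t) (n : ℕ) (G : SimpleGraph (Fin n)) :
    bootRunTime (SimpleGraph.pathGraph t) G ≤ 3 := by
  by_cases h0 : bootStep (SimpleGraph.pathGraph t) G = G
  · have hmem : (0 : ℕ) ∈ {k | bootProc (SimpleGraph.pathGraph t) G (k + 1) =
        bootProc (SimpleGraph.pathGraph t) G k} := h0
    exact le_trans (Nat.sInf_le hmem) (by norm_num)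
  · have hle : G ≤ bootStep (SimpleGraph.pathGraph t) G := le_bootStep _ _
    obtain ⟨u, v, huv1, huv0⟩ : ∃ u v, (bootStep (SimpleGraph.pathGraph t) G).Adj u v ∧
        ¬ G.Adj u v := by
      by_contra hc
      push_neg at hc
      exact h0 (le_antisymm (fun a b hab => hc a b hab) hle)
    have huv1' : G.Adj u v ∨ (u ≠ v ∧ ∃ f : Fin t → Fin n,
        IsCopyOf (SimpleGraph.pathGraph t) (G ⊔ SimpleGraph.fromEdgeSet {s(u, v)}) f ∧
        ∃ a b, (SimpleGraph.pathGraph t).Adj a b ∧ f a = u ∧ f b = v) := huv1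
    rcases huv1' with h | ⟨hne, f, ⟨finj, fmap⟩, -⟩
    · exact absurd h huv0
    set G1 := bootStep (SimpleGraph.pathGraph t) G with hG1
    have hpath1 : ∀ i : ℕ, (hi : i + 1 < t) →
        G1.Adj (f ⟨i, Nat.lt_of_succ_lt hi⟩) (f ⟨i + 1, hi⟩) := by
      intro i hi
      have hp : (SimpleGraph.pathGraph t).Adj ⟨i, Nat.lt_of_succ_lt hi⟩ ⟨i + 1, hi⟩ := by
        rw [SimpleGraph.pathGraph_adj]
        left
        rfl
      have hm := fmap _ _ hp
      rw [SimpleGraph.sup_adj] at hm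
      rcases hm with h | h
      · exact Or.inl h
      · rw [SimpleGraph.fromEdgeSet_adj, Set.mem_singleton_iff, Sym2.eq_iff] at h
        rcases h.1 with ⟨h1, h2⟩ | ⟨h1, h2⟩
        · rw [h1, h2]; exact huv1
        · rw [h1, h2]; exact huv1.symm
    set G2 := bootStep (SimpleGraph.pathGraph t) G1 with hG2
    have hlastu : ∀ x, x ≠ f ⟨t - 1, by omega⟩ → G2.Adj (f ⟨t - 1, by omega⟩) x :=
      fun x hx => endpoint_univ ht f finj hpath1 x hx
    have hfirstu : ∀ x, x ≠ f ⟨0, by omega⟩ → G2.Adj (f ⟨0, by omega⟩) x := by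
      intro x hx
      set g : Fin t → Fin n := fun i => f ⟨t - 1 - i.val, by omega⟩ with hg
      have ginj : Function.Injective g := by
        rintro ⟨a, ha⟩ ⟨b, hb⟩ h
        have := finj h
        simp only [Fin.mk.injEq] at this ⊢
        omega
      have gadj : ∀ i : ℕ, (hi : i + 1 < t) →
          G1.Adj (g ⟨i, Nat.lt_of_succ_lt hi⟩) (g ⟨i + 1, hi⟩) := by
        intro i hi
        simp only [hg]
        convert (hpath1 (t - 2 - i) (by omega)).symm using 2 <;>
          (simp only [Fin.mk.injEq]; omega)
      have hge : g ⟨t - 1, by omega⟩ = f ⟨0, by omega⟩ := by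
        simp only [hg]
        congr 1
        simp only [Fin.mk.injEq]
        omega
      have hres := endpoint_univ ht g ginj gadj x (by rw [hge]; exact hx)
      rwa [hge] at hres
    have hpath2 : ∀ i : ℕ, (hi : i + 1 < t) →
        G2.Adj (f ⟨i, Nat.lt_of_succ_lt hi⟩) (f ⟨i + 1, hi⟩) :=
      fun i hi => le_bootStep _ G1 (hpath1 i hi)
    have hall : ∀ a b : Fin n, a ≠ b → (bootStep (SimpleGraph.pathGraph t) G2).Adj a b :=
      fun a b hab => all_pairs ht f finj hpath2 hfirstu hlastu a b hab
    have h3 : bootProc (SimpleGraph.pathGraph t) G 3 = ⊤ := by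
      have he : bootProc (SimpleGraph.pathGraph t) G 3 =
          bootStep (SimpleGraph.pathGraph t) G2 := rfl
      rw [he]
      ext a b
      simp only [SimpleGraph.top_adj]
      exact ⟨fun h => h.ne, fun h => hall a b h⟩
    have hmem : (3 : ℕ) ∈ {k | bootProc (SimpleGraph.pathGraph t) G (k + 1) =
        bootProc (SimpleGraph.pathGraph t) G k} := by
      show bootProc (SimpleGraph.pathGraph t) G 4 = bootProc (SimpleGraph.pathGraph t) G 3
      have h4 : bootProc (SimpleGraph.pathGraph t) G 4 =
          bootStep (SimpleGraph.pathGraph t) (bootProc (SimpleGraph.pathGraph t) G 3) := rfl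
      rw [h4, h3, bootStep_top]
    exact Nat.sInf_le hmem
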